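/- Under unconfoundedness of R given a discrete covariate X (conditional on Z), the principal strata proportions within covariate cells are identified: P(Y₀=0, Y₁=0 | X=x) = P(Y=0 | R=1, X=x), P(Y₀=1, Y₁=1 | X=x) = P(Y=1 | R=0, X=x), and P(Y₀=0, Y₁=1 | X=x) = P(Y=1 | R=1, X=x) − P(Y=1 | R=0, X=x), assuming also monotonicity Y₀ ≤ Y₁ and exclusion restriction. -/

import Mathlib

open Finset
open scoped Classical

namespace PS

/-- Probability of an event `A` under weight function `p` on a finite sample space. -/
noncomputable def Prob {Ω : Type*} [Fintype Ω] (p : Ω → ℝ) (A : Ω → Prop) : ℝ :=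
  ∑ ω ∈ Finset.univ.filter A, p ω

/-- Conditional probability `P(A | B)`. -/
noncomputable def CProb {Ω : Type*} [Fintype Ω] (p : Ω → ℝ) (A B : Ω → Prop) : ℝ :=
  Prob p (fun ω => A ω ∧ B ω) / Prob p B

/-- Conditional expectation `E[f | B]`. -/
noncomputable def CExp {Ω : Type*} [Fintype Ω] (p : Ω → ℝ) (f : Ω → ℝ) (B : Ω → Prop) : ℝ :=
  (∑ ω ∈ Finset.univ.filter B, p ω * f ω) / Prob p B

/-- Indicator of a Boolean value, as a real number. -/
def ind (b : Bool) : ℝ := if b then 1 else 0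

/-- Observed recommendation `R = R_Z`. -/
def obsR {Ω : Type*} (Z R₀ R₁ : Ω → Bool) (ω : Ω) : Bool := if Z ω then R₁ ω else R₀ ω

/-- Observed outcome `Y = Y_R` (exclusion restriction). -/
def obsY {Ω : Type*} (Rv Y₀ Y₁ : Ω → Bool) (ω : Ω) : Bool := if Rv ω then Y₁ ω else Y₀ ω

/-- `Z` is independent of the vector `(R₀, R₁, Y₀, Y₁)`. -/
def IndepZ {Ω : Type*} [Fintype Ω] (p : Ω → ℝ) (Z R₀ R₁ Y₀ Y₁ : Ω → Bool) : Prop :=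
  ∀ z a b c d : Bool,
    Prob p (fun ω => Z ω = z ∧ R₀ ω = a ∧ R₁ ω = b ∧ Y₀ ω = c ∧ Y₁ ω = d) =
      Prob p (fun ω => Z ω = z) *
        Prob p (fun ω => R₀ ω = a ∧ R₁ ω = b ∧ Y₀ ω = c ∧ Y₁ ω = d)


theorem Prob_congr {Ω : Type*} [Fintype Ω] (p : Ω → ℝ) {A B : Ω → Prop}
    (h : ∀ ω, A ω ↔ B ω) : Prob p A = Prob p B := by
  unfold Prob
  congr 1
  exact Finset.filter_congr (fun ω _ => h ω)

theorem Prob_split_bool {Ω : Type*} [Fintype Ω] (p : Ω → ℝ) (B : Ω → Bool) (A : Ω → Prop) :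
    Prob p A = Prob p (fun ω => B ω = true ∧ A ω) + Prob p (fun ω => B ω = false ∧ A ω) := by
  unfold Prob
  rw [Finset.sum_filter, Finset.sum_filter, Finset.sum_filter, ← Finset.sum_add_distrib]
  apply Finset.sum_congr rfl
  intro ω _
  rcases Bool.dichotomy (B ω) with h | h <;> simp [h]

theorem stmt16 {Ω : Type*} [Fintype Ω] {ι : Type*} [Fintype ι]
    (p : Ω → ℝ) (R Y₀ Y₁ : Ω → Bool) (X : Ω → ι)
    (hp : ∀ ω, 0 ≤ p ω) (hsum : ∑ ω, p ω = 1)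
    (hX : ∀ x : ι, 0 < Prob p (fun ω => X ω = x))
    (hunconf : ∀ (x : ι) (a b r : Bool),
      CProb p (fun ω => Y₀ ω = a ∧ Y₁ ω = b ∧ R ω = r) (fun ω => X ω = x) =
        CProb p (fun ω => Y₀ ω = a ∧ Y₁ ω = b) (fun ω => X ω = x) *
          CProb p (fun ω => R ω = r) (fun ω => X ω = x))
    (hoverlap : ∀ x : ι, 0 < CProb p (fun ω => R ω = true) (fun ω => X ω = x) ∧
      CProb p (fun ω => R ω = true) (fun ω => X ω = x) < 1)
    (hmono : ∀ ω, Y₀ ω = true → Y₁ ω = true) :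
    ∀ x : ι,
      CProb p (fun ω => Y₀ ω = false ∧ Y₁ ω = false) (fun ω => X ω = x) =
        CProb p (fun ω => obsY R Y₀ Y₁ ω = false) (fun ω => R ω = true ∧ X ω = x) ∧
      CProb p (fun ω => Y₀ ω = true ∧ Y₁ ω = true) (fun ω => X ω = x) =
        CProb p (fun ω => obsY R Y₀ Y₁ ω = true) (fun ω => R ω = false ∧ X ω = x) ∧
      CProb p (fun ω => Y₀ ω = false ∧ Y₁ ω = true) (fun ω => X ω = x) =
        CProb p (fun ω => obsY R Y₀ Y₁ ω = true) (fun ω => R ω = true ∧ X ω = x) -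
          CProb p (fun ω => obsY R Y₀ Y₁ ω = true) (fun ω => R ω = false ∧ X ω = x) := by
  intro x
  have hPx := hX x
  have hPxne : Prob p (fun ω => X ω = x) ≠ 0 := ne_of_gt hPx
  -- joint identity from unconfoundedness
  have hjoint : ∀ a b r : Bool,
      Prob p (fun ω => Y₀ ω = a ∧ Y₁ ω = b ∧ R ω = r ∧ X ω = x) =
        Prob p (fun ω => Y₀ ω = a ∧ Y₁ ω = b ∧ X ω = x) *
          Prob p (fun ω => R ω = r ∧ X ω = x) / Prob p (fun ω => X ω = x) := by
    intro a b r
    have h := hunconf x a b r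
    unfold CProb at h
    rw [Prob_congr p (B := fun ω => Y₀ ω = a ∧ Y₁ ω = b ∧ R ω = r ∧ X ω = x)
      (fun ω => by tauto)] at h
    rw [Prob_congr p (A := fun ω => (Y₀ ω = a ∧ Y₁ ω = b) ∧ X ω = x)
      (B := fun ω => Y₀ ω = a ∧ Y₁ ω = b ∧ X ω = x) (fun ω => by tauto)] at h
    field_simp at h
    rw [eq_div_iff hPxne]
    exact mul_right_cancel₀ hPxne (by linear_combination (Prob p (fun ω => X ω = x)) * h)
  have hov := hoverlap x
  unfold CProb at hov
  have hRt : 0 < Prob p (fun ω => R ω = true ∧ X ω = x) := by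
    have := mul_pos hov.1 hPx
    rwa [div_mul_cancel₀ _ hPxne] at this
  have hsplit := Prob_split_bool p R (fun ω => X ω = x)
  have hRf : 0 < Prob p (fun ω => R ω = false ∧ X ω = x) := by
    have hlt : Prob p (fun ω => R ω = true ∧ X ω = x) < Prob p (fun ω => X ω = x) :=
      (div_lt_one hPx).mp hov.2
    linarith
  have hRtne := ne_of_gt hRt
  have hRfne := ne_of_gt hRf
  -- event rewrites
  have hev1 : Prob p (fun ω => obsY R Y₀ Y₁ ω = false ∧ (R ω = true ∧ X ω = x)) =
      Prob p (fun ω => Y₀ ω = false ∧ Y₁ ω = false ∧ R ω = true ∧ X ω = x) := by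
    apply Prob_congr
    intro ω
    simp only [obsY]
    constructor
    · rintro ⟨hy, hr, hx⟩
      rw [hr] at hy; simp at hy
      refine ⟨?_, hy, hr, hx⟩
      cases h0 : Y₀ ω
      · rfl
      · rw [hmono ω h0] at hy; exact absurd hy (by simp)
    · rintro ⟨h0, h1, hr, hx⟩
      exact ⟨by rw [hr]; simpa, hr, hx⟩
  have hev2 : Prob p (fun ω => obsY R Y₀ Y₁ ω = true ∧ (R ω = false ∧ X ω = x)) =
      Prob p (fun ω => Y₀ ω = true ∧ Y₁ ω = true ∧ R ω = false ∧ X ω = x) := by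
    apply Prob_congr
    intro ω
    simp only [obsY]
    constructor
    · rintro ⟨hy, hr, hx⟩
      rw [hr] at hy; simp at hy
      exact ⟨by simpa using hy, hmono ω (by simpa using hy), hr, hx⟩
    · rintro ⟨h0, h1, hr, hx⟩
      exact ⟨by rw [hr]; simpa, hr, hx⟩
  have hev3 : Prob p (fun ω => obsY R Y₀ Y₁ ω = true ∧ (R ω = true ∧ X ω = x)) =
      Prob p (fun ω => Y₁ ω = true ∧ R ω = true ∧ X ω = x) := by
    apply Prob_congr
    intro ω
    simp only [obsY]
    constructor
    · rintro ⟨hy, hr, hx⟩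
      rw [hr] at hy; simp at hy
      exact ⟨by simpa using hy, hr, hx⟩
    · rintro ⟨h1, hr, hx⟩
      exact ⟨by rw [hr]; simpa, hr, hx⟩
  have hsplitY : Prob p (fun ω => Y₁ ω = true ∧ R ω = true ∧ X ω = x) =
      Prob p (fun ω => Y₀ ω = true ∧ Y₁ ω = true ∧ R ω = true ∧ X ω = x) +
      Prob p (fun ω => Y₀ ω = false ∧ Y₁ ω = true ∧ R ω = true ∧ X ω = x) :=
    Prob_split_bool p Y₀ _
  have hg : ∀ a b : Bool, Prob p (fun ω => (Y₀ ω = a ∧ Y₁ ω = b) ∧ X ω = x) =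
      Prob p (fun ω => Y₀ ω = a ∧ Y₁ ω = b ∧ X ω = x) := fun a b =>
    Prob_congr p (fun ω => by tauto)
  unfold CProb
  rw [hg, hg, hg, hev1, hev2, hev3, hsplitY, hjoint false false true, hjoint true true false,
    hjoint true true true, hjoint false true true]
  refine ⟨?_, ?_, ?_⟩ <;> · field_simp <;> ring


end PS
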